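/- Let a, b ∈ ℂ, let P(z) = z² + az + b, and set E_P := {z ∈ ℂ : P(z) ∈ [−2,2]}. Then for every integer n ≥ 1, t_{2n}(E_P) = 2; that is, inf{ sup_{z ∈ E_P} |Q(z)| : Q ∈ ℂ[X] monic of degree 2n } = 2. -/

import Mathlib

/-- The `n`-th Chebyshev norm of a set `E ⊆ ℂ`:
`t_n(E) = inf { sup_{z ∈ E} |P(z)| : P monic of degree n }`. -/
noncomputable def chebNorm (E : Set ℂ) (n : ℕ) : ℝ :=
  sInf { r : ℝ | ∃ P : Polynomial ℂ, P.Monic ∧ P.natDegree = n ∧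
    r = ⨆ z ∈ E, ‖P.eval z‖ }

/-- The preimage `E_P = { z : z² + a z + b ∈ [-2, 2] }` of `[-2,2]` under a
monic quadratic polynomial. -/
def Equad (a b : ℂ) : Set ℂ :=
  { z : ℂ | ∃ x ∈ Set.Icc (-2 : ℝ) 2, (x : ℂ) = z ^ 2 + a * z + b }

open Polynomial Finset

namespace ChebQuadAux

/-- Power-sum polynomials: `psum a b k` evaluated at `w` gives `z₁^k + z₂^k` where
`z₁, z₂` are the roots of `z² + a z + (b - w)`. -/
noncomputable def psum (a b : ℂ) : ℕ → Polynomial ℂ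
  | 0 => C 2
  | 1 => C (-a)
  | (k+2) => C (-a) * psum a b (k+1) + (X - C b) * psum a b k

lemma psum_eval (a b w z : ℂ) (hz : z ^ 2 + a * z + (b - w) = 0) (k : ℕ) :
    (psum a b k).eval w = z ^ k + (-a - z) ^ k := by
  have hroot : ∀ u : ℂ, u ^ 2 + a * u + (b - w) = 0 →
      ∀ m : ℕ, u ^ (m + 2) = -a * u ^ (m + 1) + (w - b) * u ^ m := by
    intro u hu m
    have h2 : u ^ 2 = -a * u + (w - b) := by linear_combination hu
    calc u ^ (m + 2) = u ^ m * u ^ 2 := by ring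
    _ = u ^ m * (-a * u + (w - b)) := by rw [h2]
    _ = -a * u ^ (m + 1) + (w - b) * u ^ m := by ring
  have hz' : (-a - z) ^ 2 + a * (-a - z) + (b - w) = 0 := by linear_combination hz
  induction k using Nat.twoStepInduction with
  | zero => simp [psum]; norm_num
  | one => simp [psum]
  | more m ih1 ih2 =>
    have : psum a b (m + 2) = C (-a) * psum a b (m+1) + (X - C b) * psum a b m := rfl
    rw [this]
    simp only [eval_add, eval_mul, eval_sub, eval_C, eval_X, ih1, ih2]
    rw [hroot z hz m, hroot _ hz' m]
    ring

lemma psum_natDegree (a b : ℂ) (k : ℕ) : (psum a b k).natDegree ≤ k / 2 := by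
  induction k using Nat.twoStepInduction with
  | zero => simp [psum]
  | one => simp [psum]
  | more m ih1 ih2 =>
    have : psum a b (m + 2) = C (-a) * psum a b (m+1) + (X - C b) * psum a b m := rfl
    rw [this]
    refine le_trans (natDegree_add_le _ _) (max_le ?_ ?_)
    · refine le_trans (natDegree_mul_le) ?_
      simp only [natDegree_C, zero_add]
      omega
    · refine le_trans (natDegree_mul_le) ?_
      have : (X - C b).natDegree = 1 := natDegree_X_sub_C b
      omega

lemma psum_coeff (a b : ℂ) (k : ℕ) : (psum a b (2 * k)).coeff k = 2 := by
  induction k with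
  | zero => simp [psum]
  | succ m ih =>
    have h2 : 2 * (m + 1) = 2 * m + 2 := by ring
    rw [h2]
    have : psum a b (2 * m + 2) = C (-a) * psum a b (2*m+1) + (X - C b) * psum a b (2*m) := rfl
    rw [this]
    have hd1 : (psum a b (2*m+1)).natDegree < m + 1 :=
      lt_of_le_of_lt (psum_natDegree a b _) (by omega)
    have hd0 : (psum a b (2*m)).natDegree < m + 1 :=
      lt_of_le_of_lt (psum_natDegree a b _) (by omega)
    rw [coeff_add, coeff_C_mul, coeff_eq_zero_of_natDegree_lt hd1, mul_zero, sub_mul,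
      coeff_sub, coeff_X_mul, coeff_C_mul, coeff_eq_zero_of_natDegree_lt hd0, mul_zero]
    have h3 : 2 * m + 1 - 1 = 2 * m := by omega
    rw [ih]
    ring

/-- Monic Chebyshev-like polynomials on `[-2,2]`: `DD k (2 cos θ) = 2 cos (k θ)`. -/
noncomputable def DD : ℕ → Polynomial ℂ
  | 0 => C 2
  | 1 => X
  | (k+2) => X * DD (k+1) - DD k

lemma DD_eval (θ : ℝ) (k : ℕ) :
    (DD k).eval ((2 * Real.cos θ : ℝ) : ℂ) = ((2 * Real.cos (k * θ) : ℝ) : ℂ) := by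
  induction k using Nat.twoStepInduction with
  | zero => simp [DD]
  | one => simp [DD]
  | more m ih1 ih2 =>
    have hD : DD (m + 2) = X * DD (m+1) - DD m := rfl
    have key : 2 * Real.cos ((m+2 : ℕ) * θ)
        = (2 * Real.cos θ) * (2 * Real.cos ((m+1 : ℕ) * θ)) - 2 * Real.cos ((m : ℕ) * θ) := by
      have h1 : ((m+2 : ℕ) : ℝ) * θ = ((m+1 : ℕ) : ℝ) * θ + θ := by push_cast; ring
      have h2 : ((m : ℕ) : ℝ) * θ = ((m+1 : ℕ) : ℝ) * θ - θ := by push_cast; ring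
      rw [h1, h2, Real.cos_add, Real.cos_sub]; ring
    rw [hD]
    simp only [eval_sub, eval_mul, eval_X, ih1, ih2]
    rw [key]
    push_cast
    ring

lemma DD_facts (k : ℕ) :
    (DD k).natDegree ≤ k ∧ (DD (k+1)).Monic ∧ (DD (k+1)).natDegree = k + 1 := by
  induction k with
  | zero =>
    refine ⟨by simp [DD], ?_, ?_⟩
    · show (X : Polynomial ℂ).Monic; exact monic_X
    · show (X : Polynomial ℂ).natDegree = 1; exact natDegree_X
  | succ m ih =>
    obtain ⟨hdm, hmon, hdeg⟩ := ih
    have hD : DD (m + 2) = X * DD (m+1) - DD m := rfl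
    have hmul : (X * DD (m+1)).Monic := monic_X.mul hmon
    have hmuldeg : (X * DD (m+1)).natDegree = m + 2 := by
      rw [monic_X.natDegree_mul hmon, natDegree_X, hdeg]; omega
    have hlt : (DD m).degree < (X * DD (m+1)).degree := by
      have h1 : (DD m).degree ≤ (m : WithBot ℕ) :=
        le_trans degree_le_natDegree (by exact_mod_cast hdm)
      have h2 : (X * DD (m+1)).degree = ((m + 2 : ℕ) : WithBot ℕ) := by
        rw [degree_eq_natDegree hmul.ne_zero, hmuldeg]
      exact lt_of_le_of_lt h1 (by rw [h2]; exact_mod_cast Nat.lt_succ_of_lt (Nat.lt_succ_self m))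
    refine ⟨by omega, ?_, ?_⟩
    · rw [hD, sub_eq_add_neg]
      exact hmul.add_of_left (by rwa [degree_neg])
    · rw [hD]
      have hds := degree_sub_eq_left_of_degree_lt hlt
      exact natDegree_eq_of_degree_eq_some
        (by rw [hds, degree_eq_natDegree hmul.ne_zero, hmuldeg])

/-- Chebyshev nodes on `[-2,2]`. -/
noncomputable def xR (n : ℕ) (k : Fin (n+1)) : ℝ := 2 * Real.cos (k * Real.pi / n)

lemma xR_anti {n : ℕ} (hn : 1 ≤ n) {k l : Fin (n+1)} (h : k < l) : xR n l < xR n k := by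
  have hπ := Real.pi_pos
  have hn' : (0:ℝ) < n := by exact_mod_cast hn
  have hk : (0:ℝ) ≤ (k : ℕ) * Real.pi / n := by positivity
  have hl : ((l : ℕ) : ℝ) * Real.pi / n ≤ Real.pi := by
    rw [div_le_iff₀ hn']
    have : ((l : ℕ) : ℝ) ≤ n := by exact_mod_cast Nat.lt_succ_iff.mp l.isLt
    nlinarith
  have hkl : ((k : ℕ) : ℝ) * Real.pi / n < ((l : ℕ) : ℝ) * Real.pi / n := by
    have hcast : ((k : ℕ) : ℝ) < ((l : ℕ) : ℝ) := by exact_mod_cast h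
    rw [div_lt_div_iff₀ hn' hn']
    nlinarith [mul_pos hπ hn']
  have := Real.cos_lt_cos_of_nonneg_of_le_pi hk hl hkl
  unfold xR; nlinarith

lemma xR_inj {n : ℕ} (hn : 1 ≤ n) : Function.Injective (xR n) := by
  intro k l hkl
  rcases lt_trichotomy k l with h | h | h
  · exact absurd hkl (ne_of_gt (xR_anti hn h))
  · exact h
  · exact absurd hkl (ne_of_lt (xR_anti hn h))

lemma xR_mem {n : ℕ} (k : Fin (n+1)) : xR n k ∈ Set.Icc (-2 : ℝ) 2 := by
  have h1 := Real.neg_one_le_cos ((k : ℕ) * Real.pi / n)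
  have h2 := Real.cos_le_one ((k : ℕ) * Real.pi / n)
  unfold xR
  constructor <;> nlinarith

/-- Lagrange weights at the Chebyshev nodes. -/
noncomputable def lam (n : ℕ) (k : Fin (n+1)) : ℝ :=
  ∏ j ∈ univ.erase k, (xR n k - xR n j)⁻¹

lemma abs_lam {n : ℕ} (hn : 1 ≤ n) (k : Fin (n+1)) :
    |lam n k| = (-1 : ℝ) ^ (k : ℕ) * lam n k := by
  set s : ℝ := (-1 : ℝ) ^ (k : ℕ) with hs
  have hsplit : (univ.erase k) = Finset.Iio k ∪ Finset.Ioi k := by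
    ext j
    simp only [Finset.mem_erase, Finset.mem_univ, and_true, Finset.mem_union,
      Finset.mem_Iio, Finset.mem_Ioi]
    exact ne_iff_lt_or_gt
  have hdisj : Disjoint (Finset.Iio k) (Finset.Ioi k) := by
    rw [Finset.disjoint_left]
    intro j hj1 hj2
    simp only [Finset.mem_Iio] at hj1
    simp only [Finset.mem_Ioi] at hj2
    exact absurd (hj1.trans hj2) (lt_irrefl j)
  set P : ℝ := ∏ j ∈ univ.erase k, (xR n k - xR n j) with hP
  have hlamP : lam n k = P⁻¹ := by
    rw [lam, hP, ← Finset.prod_inv_distrib]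
  have hPsplit : P = (∏ j ∈ Finset.Iio k, (xR n k - xR n j))
      * ∏ j ∈ Finset.Ioi k, (xR n k - xR n j) := by
    rw [hP, hsplit, Finset.prod_union hdisj]
  have hIoi : 0 < ∏ j ∈ Finset.Ioi k, (xR n k - xR n j) := by
    apply Finset.prod_pos
    intro j hj
    simp only [Finset.mem_Ioi] at hj
    linarith [xR_anti hn hj]
  have hIio : ∏ j ∈ Finset.Iio k, (xR n k - xR n j)
      = s * ∏ j ∈ Finset.Iio k, (xR n j - xR n k) := by
    have h1 : ∀ j ∈ Finset.Iio k, (xR n k - xR n j) = (-1) * (xR n j - xR n k) := by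
      intro j _; ring
    rw [Finset.prod_congr rfl h1, Finset.prod_mul_distrib, Finset.prod_const, Fin.card_Iio]
  have hIiopos : 0 < ∏ j ∈ Finset.Iio k, (xR n j - xR n k) := by
    apply Finset.prod_pos
    intro j hj
    simp only [Finset.mem_Iio] at hj
    linarith [xR_anti hn hj]
  have hss : s * s = 1 := by
    rw [hs, ← pow_add]
    exact Even.neg_one_pow ⟨(k : ℕ), rfl⟩
  have hsP : 0 < s * P := by
    rw [hPsplit, hIio]
    have hreassoc : s * (s * (∏ j ∈ Finset.Iio k, (xR n j - xR n k))
        * ∏ j ∈ Finset.Ioi k, (xR n k - xR n j))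
        = (s * s) * ((∏ j ∈ Finset.Iio k, (xR n j - xR n k))
          * ∏ j ∈ Finset.Ioi k, (xR n k - xR n j)) := by ring
    rw [hreassoc, hss, one_mul]
    exact mul_pos hIiopos hIoi
  have hPne : P ≠ 0 := by
    intro h0
    rw [h0, mul_zero] at hsP
    exact lt_irrefl 0 hsP
  have hsne : s ≠ 0 := by
    intro h0
    rw [h0, zero_mul] at hsP
    exact lt_irrefl 0 hsP
  have hinv : s * lam n k = (s * P)⁻¹ := by
    rw [hlamP, mul_inv, inv_eq_of_mul_eq_one_left hss]
  have hpos : 0 < s * lam n k := by rw [hinv]; exact inv_pos.mpr hsP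
  have habs : |s| = 1 := by
    rw [hs, abs_pow, abs_neg, abs_one, one_pow]
  calc |lam n k| = |s| * |lam n k| := by rw [habs, one_mul]
  _ = |s * lam n k| := (abs_mul s _).symm
  _ = s * lam n k := abs_of_pos hpos

/-- The key Lagrange interpolation identity for the degree-`n` coefficient. -/
lemma coeff_eq_sum {n : ℕ} (hn : 1 ≤ n) (f : Polynomial ℂ)
    (hf : f.degree < ((n + 1 : ℕ) : WithBot ℕ)) :
    f.coeff n = ∑ k : Fin (n+1), f.eval ((xR n k : ℝ) : ℂ) * ((lam n k : ℝ) : ℂ) := by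
  set v : Fin (n+1) → ℂ := fun k => ((xR n k : ℝ) : ℂ) with hv
  have hvinj : Function.Injective v := by
    intro k l h
    apply xR_inj hn
    have h' : ((xR n k : ℝ) : ℂ) = ((xR n l : ℝ) : ℂ) := h
    exact_mod_cast h'
  have hvs : Set.InjOn v ↑(univ : Finset (Fin (n+1))) := Function.Injective.injOn hvinj
  have hcard : (univ : Finset (Fin (n+1))).card = n + 1 := by
    rw [Finset.card_univ, Fintype.card_fin]
  have hf' : f.degree < ((univ : Finset (Fin (n+1))).card : WithBot ℕ) := by
    rw [hcard]; exact_mod_cast hf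
  have heq := Lagrange.eq_interpolate hvs hf'
  have hbasis : ∀ k : Fin (n+1), (Lagrange.basis univ v k).coeff n
      = ∏ j ∈ univ.erase k, (v k - v j)⁻¹ := by
    intro k
    have hnd : (Lagrange.basis univ v k).natDegree = n := by
      rw [Lagrange.natDegree_basis hvs (mem_univ k), hcard]
      omega
    have h1 : (Lagrange.basis univ v k).coeff n
        = (Lagrange.basis univ v k).coeff ((Lagrange.basis univ v k).natDegree) := by
      rw [hnd]
    rw [h1, coeff_natDegree]
    rw [Lagrange.basis, leadingCoeff_prod]
    refine Finset.prod_congr rfl fun j hj => ?_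
    have hne : v k ≠ v j := fun h => (Finset.mem_erase.mp hj).1 (hvinj h).symm
    rw [Lagrange.basisDivisor, leadingCoeff_mul, leadingCoeff_C,
      (monic_X_sub_C (v j)).leadingCoeff, mul_one]
  calc f.coeff n = (Lagrange.interpolate univ v fun i => f.eval (v i)).coeff n := by rw [← heq]
  _ = ∑ k : Fin (n+1), f.eval (v k) * (Lagrange.basis univ v k).coeff n := by
      rw [Lagrange.interpolate_apply, finset_sum_coeff]
      exact Finset.sum_congr rfl fun k _ => coeff_C_mul _
  _ = ∑ k : Fin (n+1), f.eval ((xR n k : ℝ) : ℂ) * ((lam n k : ℝ) : ℂ) := by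
      refine Finset.sum_congr rfl fun k _ => ?_
      rw [hbasis k]
      congr 1
      rw [lam]
      push_cast
      rfl

lemma DD_natDegree {n : ℕ} (hn : 1 ≤ n) : (DD n).natDegree = n := by
  obtain ⟨m, rfl⟩ : ∃ m, n = m + 1 := ⟨n - 1, by omega⟩
  exact (DD_facts m).2.2

lemma DD_monic {n : ℕ} (hn : 1 ≤ n) : (DD n).Monic := by
  obtain ⟨m, rfl⟩ : ∃ m, n = m + 1 := ⟨n - 1, by omega⟩
  exact (DD_facts m).2.1

lemma DD_eval_node {n : ℕ} (hn : 1 ≤ n) (k : Fin (n+1)) :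
    (DD n).eval ((xR n k : ℝ) : ℂ) = ((2 * (-1 : ℝ) ^ (k : ℕ) : ℝ) : ℂ) := by
  have hn' : (n : ℝ) ≠ 0 := by positivity
  have h1 := DD_eval ((k : ℕ) * Real.pi / n) n
  have h2 : (n : ℝ) * ((k : ℕ) * Real.pi / n) = (k : ℕ) * Real.pi := by
    field_simp
  have h3 : Real.cos ((k : ℕ) * Real.pi) = (-1 : ℝ) ^ (k : ℕ) := by
    have := Real.cos_add_nat_mul_pi 0 (k : ℕ)
    simpa using this
  rw [xR]
  rw [h1, h2, h3]

lemma lam_sum {n : ℕ} (hn : 1 ≤ n) : ∑ k : Fin (n+1), |lam n k| = 1 / 2 := by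
  have hdeg : (DD n).degree < ((n + 1 : ℕ) : WithBot ℕ) := by
    refine lt_of_le_of_lt degree_le_natDegree ?_
    rw [DD_natDegree hn]
    exact_mod_cast Nat.lt_succ_self n
  have hid := coeff_eq_sum hn (DD n) hdeg
  have hcoeff : (DD n).coeff n = 1 := by
    have := (DD_monic hn).coeff_natDegree
    rwa [DD_natDegree hn] at this
  rw [hcoeff] at hid
  have hid2 : (1 : ℂ) = ((∑ k : Fin (n+1), 2 * (-1 : ℝ) ^ (k : ℕ) * lam n k : ℝ) : ℂ) := by
    rw [hid]
    push_cast
    refine Finset.sum_congr rfl fun k _ => ?_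
    rw [DD_eval_node hn k]
    push_cast
    ring
  have hreal : ∑ k : Fin (n+1), 2 * (-1 : ℝ) ^ (k : ℕ) * lam n k = 1 := by
    have := hid2.symm
    exact_mod_cast this
  have hterm : ∀ k : Fin (n+1), 2 * (-1 : ℝ) ^ (k : ℕ) * lam n k = 2 * |lam n k| := by
    intro k
    rw [abs_lam hn k]
    ring
  rw [Finset.sum_congr rfl fun k _ => hterm k, ← Finset.mul_sum] at hreal
  linarith

lemma lower_bound (a b : ℂ) {n : ℕ} (hn : 1 ≤ n) (Q : Polynomial ℂ) (hQm : Q.Monic)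
    (hQd : Q.natDegree = 2 * n) (M : ℝ)
    (hM : ∀ z ∈ Equad a b, ‖Q.eval z‖ ≤ M) : 2 ≤ M := by
  -- fiber points over each node
  have hroot : ∀ k : Fin (n+1), ∃ z : ℂ, z ^ 2 + a * z + (b - ((xR n k : ℝ) : ℂ)) = 0 := by
    intro k
    set c : ℂ := b - ((xR n k : ℝ) : ℂ)
    have hdeg : (X ^ 2 + (C a * X + C c)).degree = 2 := by
      rw [degree_add_eq_left_of_degree_lt]
      · exact degree_X_pow 2
      · refine lt_of_le_of_lt degree_linear_le ?_
        rw [degree_X_pow]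
        decide
    obtain ⟨z, hz⟩ := Complex.exists_root (by rw [hdeg]; decide)
    refine ⟨z, ?_⟩
    have := hz
    simp only [IsRoot, eval_add, eval_pow, eval_X, eval_mul, eval_C] at this
    linear_combination this
  choose zz hzz using hroot
  have hmem1 : ∀ k : Fin (n+1), zz k ∈ Equad a b := by
    intro k
    exact ⟨xR n k, xR_mem k, by linear_combination -(hzz k)⟩
  have hmem2 : ∀ k : Fin (n+1), (-a - zz k) ∈ Equad a b := by
    intro k
    exact ⟨xR n k, xR_mem k, by linear_combination -(hzz k)⟩
  -- the trace polynomial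
  set G : Polynomial ℂ := ∑ j ∈ Finset.range (2 * n + 1), C (Q.coeff j) * psum a b j with hG
  have hGdeg : G.degree < ((n + 1 : ℕ) : WithBot ℕ) := by
    refine lt_of_le_of_lt (degree_sum_le _ _) ?_
    rw [Finset.sup_lt_iff (by exact_mod_cast WithBot.bot_lt_coe (n+1))]
    intro j hj
    rw [Finset.mem_range] at hj
    calc (C (Q.coeff j) * psum a b j).degree ≤ 0 + (psum a b j).degree :=
          le_trans (degree_mul_le _ _) (add_le_add degree_C_le le_rfl)
    _ = (psum a b j).degree := by rw [zero_add]
    _ ≤ ((psum a b j).natDegree : WithBot ℕ) := degree_le_natDegree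
    _ ≤ ((n : ℕ) : WithBot ℕ) := by
        have := psum_natDegree a b j
        exact_mod_cast Nat.le_trans this (by omega)
    _ < ((n + 1 : ℕ) : WithBot ℕ) := by exact_mod_cast Nat.lt_succ_self n
  have hGcoeff : G.coeff n = 2 := by
    rw [hG, finset_sum_coeff]
    rw [Finset.sum_eq_single (2 * n)]
    · rw [coeff_C_mul, psum_coeff]
      have : Q.coeff (2 * n) = 1 := by
        have := hQm.coeff_natDegree
        rwa [hQd] at this
      rw [this, one_mul]
    · intro j hj hjne
      rw [Finset.mem_range] at hj
      have hzc : (psum a b j).coeff n = 0 :=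
        coeff_eq_zero_of_natDegree_lt (lt_of_le_of_lt (psum_natDegree a b j) (by omega))
      rw [coeff_C_mul, hzc, mul_zero]
    · intro h
      exact absurd (Finset.mem_range.mpr (by omega)) h
  have hGeval : ∀ k : Fin (n+1),
      G.eval ((xR n k : ℝ) : ℂ) = Q.eval (zz k) + Q.eval (-a - zz k) := by
    intro k
    rw [hG, eval_finset_sum]
    have : ∀ j ∈ Finset.range (2 * n + 1),
        (C (Q.coeff j) * psum a b j).eval ((xR n k : ℝ) : ℂ)
        = Q.coeff j * (zz k) ^ j + Q.coeff j * (-a - zz k) ^ j := by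
      intro j _
      rw [eval_mul, eval_C, psum_eval a b _ _ (hzz k) j]
      ring
    rw [Finset.sum_congr rfl this, Finset.sum_add_distrib]
    have he1 : Q.eval (zz k) = ∑ j ∈ Finset.range (2 * n + 1), Q.coeff j * (zz k) ^ j := by
      rw [← hQd]
      exact eval_eq_sum_range _
    have he2 : Q.eval (-a - zz k)
        = ∑ j ∈ Finset.range (2 * n + 1), Q.coeff j * (-a - zz k) ^ j := by
      rw [← hQd]
      exact eval_eq_sum_range _
    rw [he1, he2]
  -- the estimate
  have hid := coeff_eq_sum hn G hGdeg
  have h2 : (2 : ℝ) = ‖G.coeff n‖ := by rw [hGcoeff]; simp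
  rw [hid] at h2
  have hMnn : 0 ≤ M := le_trans (norm_nonneg _) (hM _ (hmem1 0))
  calc (2 : ℝ) = ‖∑ k : Fin (n+1),
        G.eval ((xR n k : ℝ) : ℂ) * ((lam n k : ℝ) : ℂ)‖ := h2
  _ ≤ ∑ k : Fin (n+1), ‖G.eval ((xR n k : ℝ) : ℂ) * ((lam n k : ℝ) : ℂ)‖ :=
      norm_sum_le _ _
  _ ≤ ∑ k : Fin (n+1), (2 * M) * |lam n k| := by
      refine Finset.sum_le_sum fun k _ => ?_
      rw [norm_mul, Complex.norm_real, Real.norm_eq_abs]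
      refine mul_le_mul_of_nonneg_right ?_ (abs_nonneg _)
      rw [hGeval k]
      calc ‖Q.eval (zz k) + Q.eval (-a - zz k)‖
          ≤ ‖Q.eval (zz k)‖ + ‖Q.eval (-a - zz k)‖ :=
            norm_add_le _ _
      _ ≤ M + M := add_le_add (hM _ (hmem1 k)) (hM _ (hmem2 k))
      _ = 2 * M := by ring
  _ = (2 * M) * ∑ k : Fin (n+1), |lam n k| := by rw [← Finset.mul_sum]
  _ = (2 * M) * (1 / 2) := by rw [lam_sum hn]
  _ = M := by ring

lemma bddAbove_evals (a b : ℂ) (Q : Polynomial ℂ) :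
    ∃ CQ : ℝ, ∀ z ∈ Equad a b, ‖Q.eval z‖ ≤ CQ := by
  have hsub : Equad a b ⊆ Metric.closedBall 0 (‖a‖ + ‖b‖ + 3) := by
    rintro z ⟨x, hx, hxe⟩
    rw [Metric.mem_closedBall, Complex.dist_eq, sub_zero]
    set t := ‖z‖ with ht0
    have ht : 0 ≤ t := norm_nonneg z
    have hA : 0 ≤ ‖a‖ := norm_nonneg a
    have hB : 0 ≤ ‖b‖ := norm_nonneg b
    have hz2 : (z ^ 2 : ℂ) = (x : ℂ) - a * z - b := by linear_combination -hxe
    have habs : t ^ 2 ≤ 2 + ‖a‖ * t + ‖b‖ := by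
      have h1 : ‖z ^ 2‖
          ≤ ‖(x : ℂ) - a * z‖ + ‖b‖ := by
        rw [hz2]
        exact norm_sub_le _ _
      have h2 : ‖(x : ℂ) - a * z‖
          ≤ ‖(x : ℂ)‖ + ‖a * z‖ := norm_sub_le _ _
      have h3 : ‖(x : ℂ)‖ ≤ 2 := by
        rw [Complex.norm_real, Real.norm_eq_abs]
        exact abs_le.mpr ⟨hx.1, hx.2⟩
      have h4 : ‖z ^ 2‖ = t ^ 2 := by rw [norm_pow]
      have h5 : ‖a * z‖ = ‖a‖ * t := by rw [norm_mul]
      nlinarith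
    nlinarith
  have hclosed : IsClosed (Equad a b) := by
    have hEq : Equad a b
        = (fun z : ℂ => z ^ 2 + a * z + b) ⁻¹' (Complex.ofReal '' Set.Icc (-2 : ℝ) 2) := by
      ext z
      simp only [Equad, Set.mem_setOf_eq, Set.mem_preimage, Set.mem_image, Set.mem_Icc]
    rw [hEq]
    refine IsClosed.preimage ?_ (((isCompact_Icc).image Complex.continuous_ofReal).isClosed)
    exact ((continuous_pow 2).add (continuous_const.mul continuous_id)).add continuous_const
  have hcomp : IsCompact (Equad a b) :=
    (isCompact_closedBall (0 : ℂ) _).of_isClosed_subset hclosed hsub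
  have hcont : ContinuousOn (fun z : ℂ => ‖Q.eval z‖) (Equad a b) :=
    (continuous_norm.comp Q.continuous).continuousOn
  obtain ⟨CQ, hCQ⟩ := hcomp.bddAbove_image hcont
  exact ⟨CQ, fun z hz => hCQ ⟨z, hz, rfl⟩⟩


end ChebQuadAux

theorem chebNorm_quad_even_eq_two (a b : ℂ) (n : ℕ) (hn : 1 ≤ n) :
    chebNorm (Equad a b) (2 * n) = 2 := by
  classical
  unfold chebNorm
  set E := Equad a b with hE
  set S := { r : ℝ | ∃ P : Polynomial ℂ, P.Monic ∧ P.natDegree = 2 * n ∧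
    r = ⨆ z ∈ E, ‖P.eval z‖ } with hS
  have hlb : ∀ r ∈ S, (2 : ℝ) ≤ r := by
    rintro r ⟨Q, hQm, hQd, rfl⟩
    obtain ⟨CQ, hCQ⟩ := ChebQuadAux.bddAbove_evals a b Q
    have hbdd : BddAbove (Set.range fun z : ℂ => ⨆ _ : z ∈ E, ‖Q.eval z‖) := by
      refine ⟨max CQ 0, ?_⟩
      rintro y ⟨z, rfl⟩
      dsimp only
      by_cases hz : z ∈ E
      · haveI : Nonempty (z ∈ E) := ⟨hz⟩
        rw [ciSup_const]
        exact le_max_of_le_left (hCQ z hz)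
      · haveI : IsEmpty (z ∈ E) := ⟨hz⟩
        rw [Real.iSup_of_isEmpty]
        exact le_max_right _ _
    have hM : ∀ z ∈ E, ‖Q.eval z‖ ≤ ⨆ z ∈ E, ‖Q.eval z‖ := by
      intro z hz
      haveI : Nonempty (z ∈ E) := ⟨hz⟩
      calc ‖Q.eval z‖
          = ⨆ _ : z ∈ E, ‖Q.eval z‖ := (ciSup_const).symm
      _ ≤ ⨆ z ∈ E, ‖Q.eval z‖ := le_ciSup hbdd z
    exact ChebQuadAux.lower_bound a b hn Q hQm hQd _ hM
  set inr : Polynomial ℂ := X ^ 2 + (C a * X + C b) with hinner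
  have hlin : (C a * X + C b).degree < (X ^ 2 : Polynomial ℂ).degree := by
    refine lt_of_le_of_lt degree_linear_le ?_
    rw [degree_X_pow]
    decide
  have hinner_monic : inr.Monic := (monic_X_pow 2).add_of_left hlin
  have hinner_deg : inr.natDegree = 2 := by
    have hdeg : inr.degree = 2 := by
      rw [hinner, degree_add_eq_left_of_degree_lt hlin, degree_X_pow]
      rfl
    exact natDegree_eq_of_degree_eq_some hdeg
  set Qup : Polynomial ℂ := (ChebQuadAux.DD n).comp inr with hQup
  have hQup_monic : Qup.Monic :=
    (ChebQuadAux.DD_monic hn).comp hinner_monic (by rw [hinner_deg]; omega)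
  have hQup_deg : Qup.natDegree = 2 * n := by
    rw [hQup, natDegree_comp, hinner_deg, ChebQuadAux.DD_natDegree hn]
    ring
  have hQup_val : ∀ z ∈ E, ‖Qup.eval z‖ ≤ 2 := by
    rintro z ⟨x, hx, hxe⟩
    have hev : Qup.eval z = (ChebQuadAux.DD n).eval ((x : ℝ) : ℂ) := by
      rw [hQup, eval_comp]
      congr 1
      rw [hinner]
      simp only [eval_add, eval_pow, eval_X, eval_mul, eval_C]
      linear_combination -hxe
    set θ := Real.arccos (x / 2) with hθ
    have hcos : 2 * Real.cos θ = x := by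
      rw [hθ, Real.cos_arccos (by linarith [hx.1]) (by linarith [hx.2])]
      ring
    have hDD := ChebQuadAux.DD_eval θ n
    rw [hev, show ((x : ℝ) : ℂ) = ((2 * Real.cos θ : ℝ) : ℂ) by rw [hcos], hDD,
      Complex.norm_real, Real.norm_eq_abs]
    have h1 := Real.neg_one_le_cos ((n : ℝ) * θ)
    have h2 := Real.cos_le_one ((n : ℝ) * θ)
    rw [abs_le]
    constructor <;> nlinarith
  set rup : ℝ := ⨆ z ∈ E, ‖Qup.eval z‖ with hrup
  have hrupmem : rup ∈ S := ⟨Qup, hQup_monic, hQup_deg, rfl⟩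
  have hrup2 : rup ≤ 2 := by
    refine ciSup_le fun z => ?_
    by_cases hz : z ∈ E
    · haveI : Nonempty (z ∈ E) := ⟨hz⟩
      rw [ciSup_const]
      exact hQup_val z hz
    · haveI : IsEmpty (z ∈ E) := ⟨hz⟩
      rw [Real.iSup_of_isEmpty]
      norm_num
  have hSne : S.Nonempty := ⟨rup, hrupmem⟩
  have hSbdd : BddBelow S := ⟨2, hlb⟩
  exact le_antisymm (le_trans (csInf_le hSbdd hrupmem) hrup2) (le_csInf hSne hlb)
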